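/- Energy conservation for the discrete n-th gradient particle system, periodic case. Let n ≥ 1, A_0, …, A_n ∈ ℝ, R ∈ C¹(ℝ²), N ∈ ℕ, ε > 0, and let u_i : [0,T] → ℝ, i ∈ ℤ/N, be a C² solution of the Euler–Lagrange equations ü_i + Σ_{α=0}^n (−1)^α A_α (Δ_ε^α u)_i + ∂_{ξ₀}R(u_i, (D⁺_ε u)_i) − (D⁻_ε [∂_{ξ₁}R(u, D⁺_ε u)])_i = 0. Then the discrete energy E_ε(t) = Σ_{i ∈ ℤ/N} ε [ (1/2) u̇_i(t)² + (1/2) Σ_{α=0}^n A_α |(D_ε^α u(t))_i|² + R(u_i(t), (D⁺_ε u(t))_i) ] is constant in t. -/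

import Mathlib

open Finset Set

noncomputable section

/-- Discrete Laplacian on the periodic lattice `ℤ/N`:
`(Δ_ε u)_i = ε⁻² (u_{i+1} + u_{i-1} - 2 u_i)`. -/
def latLap (ε : ℝ) {N : ℕ} (v : ZMod N → ℝ) : ZMod N → ℝ :=
  fun i => (v (i + 1) + v (i - 1) - 2 * v i) / ε ^ 2

/-- Right discrete derivative on the periodic lattice: `(D⁺_ε u)_i = (u_{i+1} - u_i)/ε`. -/
def latDplus (ε : ℝ) {N : ℕ} (v : ZMod N → ℝ) : ZMod N → ℝ :=
  fun i => (v (i + 1) - v i) / ε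

/-- Left discrete derivative on the periodic lattice: `(D⁻_ε u)_i = (u_i - u_{i-1})/ε`. -/
def latDminus (ε : ℝ) {N : ℕ} (v : ZMod N → ℝ) : ZMod N → ℝ :=
  fun i => (v i - v (i - 1)) / ε

/-- The `α`-th discrete derivative on the lattice: `D_ε^α = Δ_ε^{α/2}` for `α` even
and `D_ε^α = D⁺_ε Δ_ε^{(α-1)/2}` for `α` odd. -/
def latD (ε : ℝ) {N : ℕ} (α : ℕ) (v : ZMod N → ℝ) : ZMod N → ℝ :=
  if α % 2 = 0 then (latLap ε)^[α / 2] v else latDplus ε ((latLap ε)^[α / 2] v)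

set_option linter.unusedSectionVars false

variable {N : ℕ} [NeZero N]

lemma sum_shift (f : ZMod N → ℝ) : ∑ i : ZMod N, f (i + 1) = ∑ i : ZMod N, f i :=
  Fintype.sum_equiv (Equiv.addRight 1) _ _ (fun _ => rfl)

lemma sbp (ε : ℝ) (f g : ZMod N → ℝ) :
    ∑ i : ZMod N, latDplus ε f i * g i = -∑ i : ZMod N, f i * latDminus ε g i := by
  have h : ∑ i : ZMod N, f (i + 1) * g i = ∑ i : ZMod N, f i * g (i - 1) := by
    have h0 := sum_shift (N := N) (fun i => f i * g (i - 1))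
    simp only [add_sub_cancel_right] at h0
    exact h0
  have e1 : ∀ x : ZMod N, latDplus ε f x * g x = (f (x + 1) * g x - f x * g x) / ε := by
    intro x; simp only [latDplus]; ring
  have e2 : ∀ x : ZMod N, f x * latDminus ε g x = (f x * g x - f x * g (x - 1)) / ε := by
    intro x; simp only [latDminus]; ring
  simp only [e1, e2]
  rw [← Finset.sum_div, ← Finset.sum_div, ← neg_div]
  congr 1
  simp only [sub_mul, mul_sub, Finset.sum_sub_distrib, h]
  ring

lemma sbp' (ε : ℝ) (f g : ZMod N → ℝ) :
    ∑ i : ZMod N, latDminus ε f i * g i = -∑ i : ZMod N, f i * latDplus ε g i := by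
  have := sbp ε g f
  have h2 : ∑ i : ZMod N, g i * latDminus ε f i = -∑ i : ZMod N, latDplus ε g i * f i := by
    rw [← neg_neg (∑ i : ZMod N, g i * latDminus ε f i), ← this]
  calc ∑ i : ZMod N, latDminus ε f i * g i = ∑ i : ZMod N, g i * latDminus ε f i := by
        apply Finset.sum_congr rfl; intro i _; ring
    _ = -∑ i : ZMod N, latDplus ε g i * f i := h2
    _ = -∑ i : ZMod N, f i * latDplus ε g i := by
        congr 1; apply Finset.sum_congr rfl; intro i _; ring

lemma lap_eq (ε : ℝ) (f : ZMod N → ℝ) : latLap ε f = latDminus ε (latDplus ε f) := by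
  funext i
  simp only [latLap, latDminus, latDplus, sub_add_cancel]
  rw [div_sub_div_same, div_div]
  ring_nf

lemma lap_symm (ε : ℝ) (f g : ZMod N → ℝ) :
    ∑ i : ZMod N, latLap ε f i * g i = ∑ i : ZMod N, f i * latLap ε g i := by
  have h1 := sbp ε f (latDplus ε g)
  rw [lap_eq ε f, sbp', lap_eq ε g]
  linarith [h1]

lemma lapIter_symm (ε : ℝ) (k : ℕ) (f g : ZMod N → ℝ) :
    ∑ i : ZMod N, (latLap ε)^[k] f i * g i = ∑ i : ZMod N, f i * (latLap ε)^[k] g i := by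
  induction k generalizing g with
  | zero => simp
  | succ k ih =>
    simp only [Function.iterate_succ_apply']
    calc ∑ i : ZMod N, latLap ε ((latLap ε)^[k] f) i * g i
        = ∑ i : ZMod N, (latLap ε)^[k] f i * latLap ε g i := lap_symm ε _ g
      _ = ∑ i : ZMod N, f i * (latLap ε)^[k] (latLap ε g) i := ih (latLap ε g)
      _ = ∑ i : ZMod N, f i * latLap ε ((latLap ε)^[k] g) i := by
          simp only [← Function.iterate_succ_apply, Function.iterate_succ_apply']

lemma latD_pairing (ε : ℝ) (α : ℕ) (f g : ZMod N → ℝ) :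
    ∑ i : ZMod N, latD ε α f i * latD ε α g i
      = (-1 : ℝ) ^ α * ∑ i : ZMod N, (latLap ε)^[α] f i * g i := by
  rcases Nat.even_or_odd α with he | ho
  · have hm : α % 2 = 0 := Nat.even_iff.mp he
    have hk : α / 2 + α / 2 = α := by omega
    simp only [latD, hm, if_true]
    rw [he.neg_one_pow, one_mul]
    calc ∑ i : ZMod N, (latLap ε)^[α / 2] f i * (latLap ε)^[α / 2] g i
        = ∑ i : ZMod N, (latLap ε)^[α / 2] ((latLap ε)^[α / 2] f) i * g i :=
          (lapIter_symm ε (α / 2) ((latLap ε)^[α / 2] f) g).symm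
      _ = ∑ i : ZMod N, (latLap ε)^[α] f i * g i := by
          simp only [← Function.iterate_add_apply, hk]
  · have hm : α % 2 = 1 := Nat.odd_iff.mp ho
    have hm0 : ¬ (α % 2 = 0) := by omega
    have hk : (α / 2 + 1) + α / 2 = α := by omega
    simp only [latD, hm0, if_false]
    rw [ho.neg_one_pow]
    calc ∑ i : ZMod N, latDplus ε ((latLap ε)^[α / 2] f) i * latDplus ε ((latLap ε)^[α / 2] g) i
        = -∑ i : ZMod N, (latLap ε)^[α / 2] f i * latDminus ε (latDplus ε ((latLap ε)^[α / 2] g)) i :=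
          sbp ε _ _
      _ = -∑ i : ZMod N, (latLap ε)^[α / 2] f i * (latLap ε)^[α / 2 + 1] g i := by
          rw [← lap_eq]
          simp only [Function.iterate_succ_apply']
      _ = -∑ i : ZMod N, (latLap ε)^[α / 2 + 1] ((latLap ε)^[α / 2] f) i * g i := by
          rw [lapIter_symm ε (α / 2 + 1) ((latLap ε)^[α / 2] f) g]
      _ = -1 * ∑ i : ZMod N, (latLap ε)^[α] f i * g i := by
          simp only [← Function.iterate_add_apply, hk]; ring

lemma hasDerivAt_latLap {ε : ℝ} {f : ℝ → ZMod N → ℝ} {g : ZMod N → ℝ} {t : ℝ}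
    (h : ∀ j, HasDerivAt (fun s => f s j) (g j) t) (i : ZMod N) :
    HasDerivAt (fun s => latLap ε (f s) i) (latLap ε g i) t := by
  have := (((h (i + 1)).add (h (i - 1))).sub ((h i).const_mul 2)).div_const (ε ^ 2)
  simpa [latLap] using this

lemma hasDerivAt_latLapIter {ε : ℝ} {f : ℝ → ZMod N → ℝ} {g : ZMod N → ℝ} {t : ℝ} (k : ℕ)
    (h : ∀ j, HasDerivAt (fun s => f s j) (g j) t) :
    ∀ i, HasDerivAt (fun s => (latLap ε)^[k] (f s) i) ((latLap ε)^[k] g i) t := by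
  induction k with
  | zero => simpa using h
  | succ k ih =>
    intro i
    have := hasDerivAt_latLap (ε := ε) (f := fun s => (latLap ε)^[k] (f s)) (g := (latLap ε)^[k] g) ih i
    simpa [Function.iterate_succ_apply'] using this

lemma hasDerivAt_latDplus {ε : ℝ} {f : ℝ → ZMod N → ℝ} {g : ZMod N → ℝ} {t : ℝ}
    (h : ∀ j, HasDerivAt (fun s => f s j) (g j) t) (i : ZMod N) :
    HasDerivAt (fun s => latDplus ε (f s) i) (latDplus ε g i) t := by
  have := ((h (i + 1)).sub (h i)).div_const ε
  simpa [latDplus] using this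

lemma hasDerivAt_latD {ε : ℝ} {f : ℝ → ZMod N → ℝ} {g : ZMod N → ℝ} {t : ℝ} (α : ℕ)
    (h : ∀ j, HasDerivAt (fun s => f s j) (g j) t) (i : ZMod N) :
    HasDerivAt (fun s => latD ε α (f s) i) (latD ε α g i) t := by
  by_cases hm : α % 2 = 0
  · simpa [latD, hm] using hasDerivAt_latLapIter (α / 2) h i
  · simpa [latD, hm] using
      hasDerivAt_latDplus (f := fun s => (latLap ε)^[α / 2] (f s))
        (g := (latLap ε)^[α / 2] g) (hasDerivAt_latLapIter (α / 2) h) i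

lemma fderiv_uncurry_apply (R : ℝ → ℝ → ℝ) (hR : ContDiff ℝ 1 (Function.uncurry R))
    (p : ℝ × ℝ) (x y : ℝ) :
    fderiv ℝ (Function.uncurry R) p (x, y)
      = x * deriv (fun a => R a p.2) p.1 + y * deriv (fun b => R p.1 b) p.2 := by
  have hd : DifferentiableAt ℝ (Function.uncurry R) p :=
    (hR.differentiable one_ne_zero).differentiableAt
  have h1 : HasDerivAt (fun a => R a p.2) (fderiv ℝ (Function.uncurry R) p (1, 0)) p.1 := by
    have hcurve : HasDerivAt (fun a : ℝ => (a, p.2)) ((1 : ℝ), (0 : ℝ)) p.1 :=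
      (hasDerivAt_id p.1).prodMk (hasDerivAt_const p.1 p.2)
    have := hd.hasFDerivAt.comp_hasDerivAt_of_eq p.1 hcurve (by simp)
    exact this
  have h2 : HasDerivAt (fun b => R p.1 b) (fderiv ℝ (Function.uncurry R) p (0, 1)) p.2 := by
    have hcurve : HasDerivAt (fun b : ℝ => (p.1, b)) ((0 : ℝ), (1 : ℝ)) p.2 :=
      (hasDerivAt_const p.2 p.1).prodMk (hasDerivAt_id p.2)
    have := hd.hasFDerivAt.comp_hasDerivAt_of_eq p.2 hcurve (by simp)
    exact this
  rw [h1.deriv, h2.deriv]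
  have hxy : (x, y) = x • ((1 : ℝ), (0 : ℝ)) + y • ((0 : ℝ), (1 : ℝ)) := by
    simp [Prod.ext_iff]
  rw [hxy, map_add, map_smul, map_smul]
  simp [smul_eq_mul]

lemma hasDerivAt_R_comp {R : ℝ → ℝ → ℝ} (hR : ContDiff ℝ 1 (Function.uncurry R))
    {x y : ℝ → ℝ} {x' y' : ℝ} {t : ℝ}
    (hx : HasDerivAt x x' t) (hy : HasDerivAt y y' t) :
    HasDerivAt (fun s => R (x s) (y s))
      (x' * deriv (fun a => R a (y t)) (x t) + y' * deriv (fun b => R (x t) b) (y t)) t := by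
  have hp : HasDerivAt (fun s => (x s, y s)) (x', y') t := hx.prodMk hy
  have hd : DifferentiableAt ℝ (Function.uncurry R) (x t, y t) :=
    (hR.differentiable one_ne_zero).differentiableAt
  have h := hd.hasFDerivAt.comp_hasDerivAt t hp
  rw [show fderiv ℝ (Function.uncurry R) (x t, y t) (x', y')
      = x' * deriv (fun a => R a (y t)) (x t) + y' * deriv (fun b => R (x t) b) (y t) from
    fderiv_uncurry_apply R hR (x t, y t) x' y'] at h
  exact h

/-- **Energy conservation for the discrete `n`-th gradient particle system, periodic
case.**  If `u_i : [0,T] → ℝ`, `i ∈ ℤ/N`, is a `C²` solution of the Euler–Lagrange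
equations `ü_i + Σ_α (-1)^α A_α (Δ_ε^α u)_i + ∂_{ξ₀}R(u_i, (D⁺_ε u)_i)
- (D⁻_ε[∂_{ξ₁}R(u, D⁺_ε u)])_i = 0`, then the discrete energy
`E_ε(t) = Σ_i ε [ (1/2) u̇_i² + (1/2) Σ_α A_α |(D_ε^α u)_i|² + R(u_i, (D⁺_ε u)_i) ]`
is constant in `t`. -/
theorem discrete_energy_conservation
    (n : ℕ) (hn : 1 ≤ n) (A : ℕ → ℝ)
    (R : ℝ → ℝ → ℝ) (hR : ContDiff ℝ 1 (Function.uncurry R))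
    (N : ℕ) [NeZero N] (ε : ℝ) (hε : 0 < ε) (T : ℝ) (hT : 0 < T)
    (u : ℝ → ZMod N → ℝ)
    (hu : ∀ i : ZMod N, ContDiff ℝ 2 (fun t => u t i))
    -- the Euler–Lagrange equations on `[0,T]`
    (hEL : ∀ t ∈ Icc (0 : ℝ) T, ∀ i : ZMod N,
       deriv (deriv (fun s => u s i)) t
         + (∑ α ∈ Finset.range (n + 1), (-1 : ℝ) ^ α * A α * ((latLap ε)^[α] (u t) i))
         + deriv (fun a => R a (latDplus ε (u t) i)) (u t i)
         - latDminus ε (fun j => deriv (fun b => R (u t j) b) (latDplus ε (u t) j)) i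
       = 0) :
    ∀ t ∈ Icc (0 : ℝ) T,
      (∑ i : ZMod N, ε * ((1 / 2) * (deriv (fun s => u s i) t) ^ 2
          + (1 / 2) * (∑ α ∈ Finset.range (n + 1), A α * (latD ε α (u t) i) ^ 2)
          + R (u t i) (latDplus ε (u t) i)))
      = ∑ i : ZMod N, ε * ((1 / 2) * (deriv (fun s => u s i) 0) ^ 2
          + (1 / 2) * (∑ α ∈ Finset.range (n + 1), A α * (latD ε α (u 0) i) ^ 2)
          + R (u 0 i) (latDplus ε (u 0) i)) := by
  have hEzero : ∀ τ ∈ Icc (0 : ℝ) T,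
      HasDerivAt (fun t => ∑ i : ZMod N, ε * ((1 / 2) * (deriv (fun s => u s i) t) ^ 2
          + (1 / 2) * (∑ α ∈ Finset.range (n + 1), A α * (latD ε α (u t) i) ^ 2)
          + R (u t i) (latDplus ε (u t) i))) 0 τ := by
    intro τ hτ
    set V : ZMod N → ℝ := fun j => deriv (fun s => u s j) τ with hVdef
    have hud : ∀ j : ZMod N, HasDerivAt (fun s => u s j) (V j) τ :=
      fun j => ((hu j).differentiable (by norm_num) τ).hasDerivAt
    have hvd : ∀ i : ZMod N, HasDerivAt (fun t => deriv (fun s => u s i) t)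
        (deriv (deriv (fun s => u s i)) τ) τ := by
      intro i
      have h2 : ContDiff ℝ (1 + 1) (fun s => u s i) := by
        have h := hu i
        norm_num at h
        exact h
      have h1 : ContDiff ℝ 1 (deriv (fun s => u s i)) := (contDiff_succ_iff_deriv.mp h2).2.2
      exact (h1.differentiable one_ne_zero τ).hasDerivAt
    have hDer : HasDerivAt (fun t => ∑ i : ZMod N, ε * ((1 / 2) * (deriv (fun s => u s i) t) ^ 2
          + (1 / 2) * (∑ α ∈ Finset.range (n + 1), A α * (latD ε α (u t) i) ^ 2)
          + R (u t i) (latDplus ε (u t) i)))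
        (∑ i : ZMod N, ε * (V i * deriv (deriv (fun s => u s i)) τ
          + (∑ α ∈ Finset.range (n + 1), A α * (latD ε α (u τ) i * latD ε α V i))
          + (V i * deriv (fun a => R a (latDplus ε (u τ) i)) (u τ i)
             + latDplus ε V i * deriv (fun b => R (u τ i) b) (latDplus ε (u τ) i)))) τ := by
      apply HasDerivAt.fun_sum
      intro i _
      have hT1 : HasDerivAt (fun t => (1 / 2 : ℝ) * (deriv (fun s => u s i) t) ^ 2)
          (V i * deriv (deriv (fun s => u s i)) τ) τ := by
        have h := ((hvd i).pow 2).const_mul (1 / 2 : ℝ)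
        refine h.congr_deriv ?_
        simp only [hVdef]
        ring
      have hT2 : HasDerivAt
          (fun t => (1 / 2 : ℝ) * ∑ α ∈ Finset.range (n + 1), A α * (latD ε α (u t) i) ^ 2)
          (∑ α ∈ Finset.range (n + 1), A α * (latD ε α (u τ) i * latD ε α V i)) τ := by
        have h : HasDerivAt
            (fun t => ∑ α ∈ Finset.range (n + 1), A α * (latD ε α (u t) i) ^ 2)
            (∑ α ∈ Finset.range (n + 1),
              A α * (2 * latD ε α (u τ) i ^ 1 * latD ε α V i)) τ := by
          apply HasDerivAt.fun_sum
          intro α _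
          exact ((hasDerivAt_latD (ε := ε) (g := V) α hud i).pow 2).const_mul (A α)
        have h2 := h.const_mul (1 / 2 : ℝ)
        refine h2.congr_deriv ?_
        rw [Finset.mul_sum]
        exact Finset.sum_congr rfl fun α _ => by ring
      have hT3 : HasDerivAt (fun t => R (u t i) (latDplus ε (u t) i))
          (V i * deriv (fun a => R a (latDplus ε (u τ) i)) (u τ i)
             + latDplus ε V i * deriv (fun b => R (u τ i) b) (latDplus ε (u τ) i)) τ :=
        hasDerivAt_R_comp hR (hud i) (hasDerivAt_latDplus (ε := ε) (g := V) hud i)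
      exact ((hT1.add hT2).add hT3).const_mul ε
    have hmid : (∑ i : ZMod N, ∑ α ∈ Finset.range (n + 1),
          A α * (latD ε α (u τ) i * latD ε α V i))
        = ∑ i : ZMod N,
            (∑ α ∈ Finset.range (n + 1), (-1 : ℝ) ^ α * A α * ((latLap ε)^[α] (u τ) i)) * V i := by
      rw [Finset.sum_comm]
      calc ∑ α ∈ Finset.range (n + 1), ∑ i : ZMod N, A α * (latD ε α (u τ) i * latD ε α V i)
          = ∑ α ∈ Finset.range (n + 1),
              A α * ((-1 : ℝ) ^ α * ∑ i : ZMod N, (latLap ε)^[α] (u τ) i * V i) := by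
            refine Finset.sum_congr rfl fun α _ => ?_
            rw [← Finset.mul_sum]
            congr 1
            exact latD_pairing ε α (u τ) V
        _ = ∑ α ∈ Finset.range (n + 1), ∑ i : ZMod N,
              ((-1 : ℝ) ^ α * A α * ((latLap ε)^[α] (u τ) i)) * V i := by
            refine Finset.sum_congr rfl fun α _ => ?_
            rw [Finset.mul_sum, Finset.mul_sum]
            exact Finset.sum_congr rfl fun i _ => by ring
        _ = ∑ i : ZMod N,
              (∑ α ∈ Finset.range (n + 1), (-1 : ℝ) ^ α * A α * ((latLap ε)^[α] (u τ) i)) * V i := by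
            rw [Finset.sum_comm]
            exact Finset.sum_congr rfl fun i _ => (Finset.sum_mul _ _ _).symm
    have hRpart : (∑ i : ZMod N,
          latDplus ε V i * deriv (fun b => R (u τ i) b) (latDplus ε (u τ) i))
        = -∑ i : ZMod N,
            V i * latDminus ε (fun j => deriv (fun b => R (u τ j) b) (latDplus ε (u τ) j)) i :=
      sbp ε V (fun j => deriv (fun b => R (u τ j) b) (latDplus ε (u τ) j))
    have hzero : (∑ i : ZMod N, V i * (deriv (deriv (fun s => u s i)) τ
          + (∑ α ∈ Finset.range (n + 1), (-1 : ℝ) ^ α * A α * ((latLap ε)^[α] (u τ) i))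
          + deriv (fun a => R a (latDplus ε (u τ) i)) (u τ i)
          - latDminus ε (fun j => deriv (fun b => R (u τ j) b) (latDplus ε (u τ) j)) i)) = 0 :=
      Finset.sum_eq_zero fun i _ => by rw [hEL τ hτ i, mul_zero]
    have h0 : (∑ i : ZMod N, ε * (V i * deriv (deriv (fun s => u s i)) τ
          + (∑ α ∈ Finset.range (n + 1), A α * (latD ε α (u τ) i * latD ε α V i))
          + (V i * deriv (fun a => R a (latDplus ε (u τ) i)) (u τ i)
             + latDplus ε V i * deriv (fun b => R (u τ i) b) (latDplus ε (u τ) i)))) = 0 := by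
      calc (∑ i : ZMod N, ε * (V i * deriv (deriv (fun s => u s i)) τ
          + (∑ α ∈ Finset.range (n + 1), A α * (latD ε α (u τ) i * latD ε α V i))
          + (V i * deriv (fun a => R a (latDplus ε (u τ) i)) (u τ i)
             + latDplus ε V i * deriv (fun b => R (u τ i) b) (latDplus ε (u τ) i))))
          = ∑ i : ZMod N, (ε * (V i * deriv (deriv (fun s => u s i)) τ)
            + ε * (∑ α ∈ Finset.range (n + 1), A α * (latD ε α (u τ) i * latD ε α V i))
            + (ε * (V i * deriv (fun a => R a (latDplus ε (u τ) i)) (u τ i))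
               + ε * (latDplus ε V i * deriv (fun b => R (u τ i) b) (latDplus ε (u τ) i)))) :=
            Finset.sum_congr rfl fun i _ => by ring
        _ = ε * (∑ i : ZMod N, V i * deriv (deriv (fun s => u s i)) τ)
            + ε * (∑ i : ZMod N, ∑ α ∈ Finset.range (n + 1),
                A α * (latD ε α (u τ) i * latD ε α V i))
            + (ε * (∑ i : ZMod N, V i * deriv (fun a => R a (latDplus ε (u τ) i)) (u τ i))
               + ε * (∑ i : ZMod N,
                   latDplus ε V i * deriv (fun b => R (u τ i) b) (latDplus ε (u τ) i))) := by
            simp only [Finset.sum_add_distrib, ← Finset.mul_sum]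
        _ = ε * (∑ i : ZMod N, V i * deriv (deriv (fun s => u s i)) τ)
            + ε * (∑ i : ZMod N,
                (∑ α ∈ Finset.range (n + 1), (-1 : ℝ) ^ α * A α * ((latLap ε)^[α] (u τ) i)) * V i)
            + (ε * (∑ i : ZMod N, V i * deriv (fun a => R a (latDplus ε (u τ) i)) (u τ i))
               + ε * -(∑ i : ZMod N,
                   V i * latDminus ε (fun j => deriv (fun b => R (u τ j) b) (latDplus ε (u τ) j)) i)) := by
            rw [hmid, hRpart]
        _ = ε * (∑ i : ZMod N, V i * (deriv (deriv (fun s => u s i)) τ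
            + (∑ α ∈ Finset.range (n + 1), (-1 : ℝ) ^ α * A α * ((latLap ε)^[α] (u τ) i))
            + deriv (fun a => R a (latDplus ε (u τ) i)) (u τ i)
            - latDminus ε (fun j => deriv (fun b => R (u τ j) b) (latDplus ε (u τ) j)) i)) := by
            have hm : (∑ i : ZMod N, V i * deriv (deriv (fun s => u s i)) τ)
                + (∑ i : ZMod N, (∑ α ∈ Finset.range (n + 1),
                    (-1 : ℝ) ^ α * A α * ((latLap ε)^[α] (u τ) i)) * V i)
                + ((∑ i : ZMod N, V i * deriv (fun a => R a (latDplus ε (u τ) i)) (u τ i))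
                   + -(∑ i : ZMod N, V i * latDminus ε
                        (fun j => deriv (fun b => R (u τ j) b) (latDplus ε (u τ) j)) i))
                = ∑ i : ZMod N, V i * (deriv (deriv (fun s => u s i)) τ
                  + (∑ α ∈ Finset.range (n + 1), (-1 : ℝ) ^ α * A α * ((latLap ε)^[α] (u τ) i))
                  + deriv (fun a => R a (latDplus ε (u τ) i)) (u τ i)
                  - latDminus ε (fun j => deriv (fun b => R (u τ j) b) (latDplus ε (u τ) j)) i) := by
              rw [← Finset.sum_neg_distrib, ← Finset.sum_add_distrib, ← Finset.sum_add_distrib,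
                ← Finset.sum_add_distrib]
              exact Finset.sum_congr rfl fun i _ => by ring
            rw [← hm]
            ring
        _ = 0 := by rw [hzero, mul_zero]
    exact h0 ▸ hDer
  intro t ht
  exact constant_of_has_deriv_right_zero
    (fun x hx => (hEzero x hx).continuousAt.continuousWithinAt)
    (fun x hx => (hEzero x (Ico_subset_Icc_self hx)).hasDerivWithinAt) t ht


end
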